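/- For all integers m ≥ 1, t ≥ 0 and 1 ≤ i ≤ t, the number of vertices of the Koch network K_{m,t} that have degree exactly 2(m+1)^{t-i} equals 6m(3m+1)^{i-1}, and the number of vertices of degree exactly 2(m+1)^t equals 3 (these are the initial vertices). -/

import Mathlib

/-- The triangles of the Koch network `K_{m,t}`: at step `t+1`, each old triangle survives and
each (triangle, corner, group) creates a new triangle. -/
def KochTri (m : ℕ) : ℕ → Type
  | 0 => Unit
  | t+1 => KochTri m t ⊕ (KochTri m t × Fin 3 × Fin m)

/-- The vertices of the Koch network `K_{m,t}`: at step `t+1`, each (triangle, corner, group)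
creates two new vertices. -/
def KochVertex (m : ℕ) : ℕ → Type
  | 0 => Fin 3
  | t+1 => KochVertex m t ⊕ (KochTri m t × Fin 3 × Fin m × Fin 2)

/-- The three corner vertices of each triangle. -/
def KochCorner (m : ℕ) : ∀ t, KochTri m t → Fin 3 → KochVertex m t
  | 0, _, i => i
  | t+1, Sum.inl τ, i => Sum.inl (KochCorner m t τ i)
  | t+1, Sum.inr (τ, c, g), i =>
      ![Sum.inl (KochCorner m t τ c), Sum.inr (τ, c, g, 0), Sum.inr (τ, c, g, 1)] i

instance KochTri.instDecidableEq (m : ℕ) : ∀ t, DecidableEq (KochTri m t)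
  | 0 => inferInstanceAs (DecidableEq Unit)
  | t+1 =>
    letI := KochTri.instDecidableEq m t
    inferInstanceAs (DecidableEq (KochTri m t ⊕ (KochTri m t × Fin 3 × Fin m)))

instance KochVertex.instDecidableEq (m : ℕ) : ∀ t, DecidableEq (KochVertex m t)
  | 0 => inferInstanceAs (DecidableEq (Fin 3))
  | t+1 =>
    letI := KochVertex.instDecidableEq m t
    letI := KochTri.instDecidableEq m t
    inferInstanceAs (DecidableEq (KochVertex m t ⊕ (KochTri m t × Fin 3 × Fin m × Fin 2)))

instance KochTri.instFintype (m : ℕ) : ∀ t, Fintype (KochTri m t)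
  | 0 => inferInstanceAs (Fintype Unit)
  | t+1 =>
    letI := KochTri.instFintype m t
    inferInstanceAs (Fintype (KochTri m t ⊕ (KochTri m t × Fin 3 × Fin m)))

instance KochVertex.instFintype (m : ℕ) : ∀ t, Fintype (KochVertex m t)
  | 0 => inferInstanceAs (Fintype (Fin 3))
  | t+1 =>
    letI := KochVertex.instFintype m t
    letI := KochTri.instFintype m t
    inferInstanceAs (Fintype (KochVertex m t ⊕ (KochTri m t × Fin 3 × Fin m × Fin 2)))

/-- The Koch network `K_{m,t}`: two distinct vertices are adjacent iff they are corners of a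
common triangle. -/
def KochGraph (m t : ℕ) : SimpleGraph (KochVertex m t) where
  Adj u v := u ≠ v ∧ ∃ (τ : KochTri m t) (i j : Fin 3),
      KochCorner m t τ i = u ∧ KochCorner m t τ j = v
  symm := ⟨by rintro u v ⟨hne, τ, i, j, hi, hj⟩; exact ⟨hne.symm, τ, j, i, hj, hi⟩⟩
  loopless := ⟨by rintro u ⟨hne, -⟩; exact hne rfl⟩

instance (m t : ℕ) : DecidableRel (KochGraph m t).Adj := fun u v =>
  inferInstanceAs (Decidable (u ≠ v ∧ ∃ (τ : KochTri m t) (i j : Fin 3),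
      KochCorner m t τ i = u ∧ KochCorner m t τ j = v))

/-- The step at which a vertex of `K_{m,t}` was added (initial vertices are added at step 0). -/
def KochBirth (m : ℕ) : ∀ t, KochVertex m t → ℕ
  | 0, _ => 0
  | t+1, Sum.inl v => KochBirth m t v
  | t+1, Sum.inr _ => t+1

/-- The canonical inclusion of `K_{m,t}` into `K_{m,t+1}`. -/
def KochInl (m t : ℕ) (v : KochVertex m t) : KochVertex m (t+1) := Sum.inl v

/-- The other member of the group of two with which a (non-initial) vertex was added. -/
def KochSibling (m : ℕ) : ∀ t, KochVertex m t → KochVertex m t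
  | 0, v => v
  | t+1, Sum.inl v => Sum.inl (KochSibling m t v)
  | t+1, Sum.inr (τ, c, g, p) => Sum.inr (τ, c, g, if p = 0 then 1 else 0)

/-- The father vertex of a (non-initial) vertex: the existing vertex to which its group of two
was attached. -/
def KochFather (m : ℕ) : ∀ t, KochVertex m t → KochVertex m t
  | 0, v => v
  | t+1, Sum.inl v => Sum.inl (KochFather m t v)
  | t+1, Sum.inr (τ, c, _, _) => Sum.inl (KochCorner m t τ c)

open Finset

instance KG_dec_l (m t : ℕ) (v : KochVertex m t) (u : KochVertex m (t+1)) :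
    Decidable ((KochGraph m (t+1)).Adj (Sum.inl v) u) :=
  (inferInstance : DecidableRel (KochGraph m (t+1)).Adj) _ _

instance KG_dec_r (m t : ℕ) (w : KochTri m t × Fin 3 × Fin m × Fin 2) (u : KochVertex m (t+1)) :
    Decidable ((KochGraph m (t+1)).Adj (Sum.inr w) u) :=
  (inferInstance : DecidableRel (KochGraph m (t+1)).Adj) _ _

instance KG_dec_ll (m t : ℕ) (v u : KochVertex m t) :
    Decidable ((KochGraph m (t+1)).Adj (Sum.inl v) (Sum.inl u)) :=
  (inferInstance : DecidableRel (KochGraph m (t+1)).Adj) _ _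

instance KG_dec_lr (m t : ℕ) (v : KochVertex m t) (w : KochTri m t × Fin 3 × Fin m × Fin 2) :
    Decidable ((KochGraph m (t+1)).Adj (Sum.inl v) (Sum.inr w)) :=
  (inferInstance : DecidableRel (KochGraph m (t+1)).Adj) _ _

instance KG_dec_rl (m t : ℕ) (v : KochVertex m t) (w : KochTri m t × Fin 3 × Fin m × Fin 2) :
    Decidable ((KochGraph m (t+1)).Adj (Sum.inr w) (Sum.inl v)) :=
  (inferInstance : DecidableRel (KochGraph m (t+1)).Adj) _ _

instance KG_dec_rr (m t : ℕ) (w w' : KochTri m t × Fin 3 × Fin m × Fin 2) :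
    Decidable ((KochGraph m (t+1)).Adj (Sum.inr w) (Sum.inr w')) :=
  (inferInstance : DecidableRel (KochGraph m (t+1)).Adj) _ _

instance KV_dec_eq_inl (m t : ℕ) (a : KochVertex m (t+1)) (v : KochVertex m t) :
    Decidable (a = Sum.inl v) :=
  KochVertex.instDecidableEq m (t+1) a _

instance KV_dec_eq_inr (m t : ℕ) (a : KochVertex m (t+1))
    (w : KochTri m t × Fin 3 × Fin m × Fin 2) : Decidable (a = Sum.inr w) :=
  KochVertex.instDecidableEq m (t+1) a _

instance KV_dec_eq_zero (m : ℕ) (i : Fin 3) (v : KochVertex m 0) : Decidable (i = v) :=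
  KochVertex.instDecidableEq m 0 i v

lemma card_filter_sum {α β} [Fintype α] [Fintype β] (p : α ⊕ β → Prop) [DecidablePred p] :
    (univ.filter p).card
      = (univ.filter fun a => p (Sum.inl a)).card + (univ.filter fun b => p (Sum.inr b)).card := by
  classical
  rw [← Fintype.card_subtype, ← Fintype.card_subtype, ← Fintype.card_subtype, ← Fintype.card_sum]
  exact Fintype.card_congr Equiv.subtypeSum

@[simp] lemma KV_inl_inj {m t : ℕ} {u v : KochVertex m t} :
    @Eq (KochVertex m (t+1)) (Sum.inl u) (Sum.inl v) ↔ u = v := Sum.inl_injective.eq_iff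

@[simp] lemma KV_inr_inj {m t : ℕ} {u v : KochTri m t × Fin 3 × Fin m × Fin 2} :
    @Eq (KochVertex m (t+1)) (Sum.inr u) (Sum.inr v) ↔ u = v := Sum.inr_injective.eq_iff

@[simp] lemma KV_inl_ne_inr {m t : ℕ} {u : KochVertex m t}
    {v : KochTri m t × Fin 3 × Fin m × Fin 2} :
    ¬ @Eq (KochVertex m (t+1)) (Sum.inl u) (Sum.inr v) := Sum.inl_ne_inr

@[simp] lemma KV_inr_ne_inl {m t : ℕ} {u : KochVertex m t}
    {v : KochTri m t × Fin 3 × Fin m × Fin 2} :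
    ¬ @Eq (KochVertex m (t+1)) (Sum.inr v) (Sum.inl u) := Sum.inr_ne_inl

@[simp] lemma KT_inl_inj {m t : ℕ} {u v : KochTri m t} :
    @Eq (KochTri m (t+1)) (Sum.inl u) (Sum.inl v) ↔ u = v := Sum.inl_injective.eq_iff

@[simp] lemma KT_inr_inj {m t : ℕ} {u v : KochTri m t × Fin 3 × Fin m} :
    @Eq (KochTri m (t+1)) (Sum.inr u) (Sum.inr v) ↔ u = v := Sum.inr_injective.eq_iff

@[simp] lemma KT_inl_ne_inr {m t : ℕ} {u : KochTri m t} {v : KochTri m t × Fin 3 × Fin m} :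
    ¬ @Eq (KochTri m (t+1)) (Sum.inl u) (Sum.inr v) := Sum.inl_ne_inr

@[simp] lemma KT_inr_ne_inl {m t : ℕ} {u : KochTri m t} {v : KochTri m t × Fin 3 × Fin m} :
    ¬ @Eq (KochTri m (t+1)) (Sum.inr v) (Sum.inl u) := Sum.inr_ne_inl

lemma koch_corner_inl (m t : ℕ) (τ : KochTri m t) (i : Fin 3) :
    KochCorner m (t+1) (Sum.inl τ) i = Sum.inl (KochCorner m t τ i) := rfl

lemma koch_corner_inr_eq_inl (m t : ℕ) (τ : KochTri m t) (c : Fin 3) (g : Fin m) (i : Fin 3)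
    (u : KochVertex m t) :
    KochCorner m (t+1) (Sum.inr (τ, c, g)) i = Sum.inl u ↔ i = 0 ∧ KochCorner m t τ c = u := by
  fin_cases i <;> simp [KochCorner]

lemma koch_corner_inr_eq_inr (m t : ℕ) (τ : KochTri m t) (c : Fin 3) (g : Fin m) (i : Fin 3)
    (w : KochTri m t × Fin 3 × Fin m × Fin 2) :
    KochCorner m (t+1) (Sum.inr (τ, c, g)) i = Sum.inr w ↔
      (τ, c, g, (0 : Fin 2)) = w ∧ i = 1 ∨ (τ, c, g, (1 : Fin 2)) = w ∧ i = 2 := by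
  fin_cases i <;> simp [KochCorner]
lemma koch_adj_inl_inl {m t : ℕ} {u v : KochVertex m t} :
    (KochGraph m (t+1)).Adj (Sum.inl u) (Sum.inl v) ↔ (KochGraph m t).Adj u v := by
  constructor
  · rintro ⟨hne, σ, i, j, hi, hj⟩
    refine ⟨fun h => hne (by rw [h]), ?_⟩
    match σ with
    | Sum.inl τ =>
        rw [koch_corner_inl] at hi hj
        exact ⟨τ, i, j, KV_inl_inj.mp hi, KV_inl_inj.mp hj⟩
    | Sum.inr (τ, c, g) =>
        rw [koch_corner_inr_eq_inl] at hi hj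
        exact absurd (congrArg Sum.inl (hi.2.symm.trans hj.2)) hne
  · rintro ⟨hne, τ, i, j, hi, hj⟩
    exact ⟨fun h => hne (Sum.inl_injective h), Sum.inl τ, i, j, by rw [koch_corner_inl, hi], by rw [koch_corner_inl, hj]⟩

lemma koch_adj_inl_inr {m t : ℕ} {u : KochVertex m t} {τ : KochTri m t} {c : Fin 3} {g : Fin m}
    {p : Fin 2} :
    (KochGraph m (t+1)).Adj (Sum.inl u) (Sum.inr (τ, c, g, p)) ↔ u = KochCorner m t τ c := by
  constructor
  · rintro ⟨hne, σ, i, j, hi, hj⟩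
    match σ with
    | Sum.inl τ' => rw [koch_corner_inl] at hj; exact absurd hj KV_inl_ne_inr
    | Sum.inr (τ', c', g') =>
        rw [koch_corner_inr_eq_inl] at hi
        rw [koch_corner_inr_eq_inr] at hj
        obtain ⟨-, hu⟩ := hi
        rcases hj with ⟨h, -⟩ | ⟨h, -⟩ <;>
          · obtain ⟨rfl, rfl, -⟩ := Prod.mk.injEq .. ▸ (by
              have := h
              exact ⟨congrArg (fun x => x.1) this, congrArg (fun x => x.2.1) this,
                congrArg (fun x => x.2.2.1) this⟩ :
              τ' = τ ∧ c' = c ∧ g' = g)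
            exact hu.symm
  · rintro rfl
    refine ⟨KV_inl_ne_inr, Sum.inr (τ, c, g), 0, ?_⟩
    fin_cases p
    · exact ⟨1, by simp [KochCorner], by simp [KochCorner]⟩
    · exact ⟨2, by simp [KochCorner], by simp [KochCorner]⟩

lemma koch_adj_inr_inr {m t : ℕ} {τ τ' : KochTri m t} {c c' : Fin 3} {g g' : Fin m}
    {p p' : Fin 2} :
    (KochGraph m (t+1)).Adj (Sum.inr (τ, c, g, p)) (Sum.inr (τ', c', g', p')) ↔
      τ = τ' ∧ c = c' ∧ g = g' ∧ p ≠ p' := by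
  constructor
  · rintro ⟨hne, σ, i, j, hi, hj⟩
    match σ with
    | Sum.inl σ' => rw [koch_corner_inl] at hi; exact absurd hi KV_inl_ne_inr
    | Sum.inr (σ', c'', g'') =>
        rw [koch_corner_inr_eq_inr] at hi hj
        rcases hi with ⟨h1, -⟩ | ⟨h1, -⟩ <;> rcases hj with ⟨h2, -⟩ | ⟨h2, -⟩ <;>
          injection h1 with e1 e1' <;> injection h2 with e2 e2' <;>
          injection e1' with f1 f1' <;> injection e2' with f2 f2' <;>
          injection f1' with k1 k1' <;> injection f2' with k2 k2' <;>
          subst_vars <;> simp_all <;> exact hne rfl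
  · rintro ⟨rfl, rfl, rfl, hp⟩
    refine ⟨fun h => hp (congrArg (fun x => x.2.2.2) (Sum.inr_injective h)), Sum.inr (τ, c, g), ?_⟩
    fin_cases p <;> fin_cases p'
    · exact absurd rfl hp
    · exact ⟨1, 2, by simp [KochCorner], by simp [KochCorner]⟩
    · exact ⟨2, 1, by simp [KochCorner], by simp [KochCorner]⟩
    · exact absurd rfl hp
lemma KT_card_zero (m : ℕ) : Fintype.card (KochTri m 0) = 1 := rfl

lemma KV_card_zero (m : ℕ) : Fintype.card (KochVertex m 0) = 3 := rfl

lemma KT_card_succ (m t : ℕ) : Fintype.card (KochTri m (t+1))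
    = Fintype.card (KochTri m t) + Fintype.card (KochTri m t × Fin 3 × Fin m) :=
  Fintype.card_sum

lemma KV_card_succ (m t : ℕ) : Fintype.card (KochVertex m (t+1))
    = Fintype.card (KochVertex m t) + Fintype.card (KochTri m t × Fin 3 × Fin m × Fin 2) :=
  Fintype.card_sum

lemma sum_KT_succ (m t : ℕ) (f : KochTri m (t+1) → ℕ) :
    ∑ x : KochTri m (t+1), f x
      = (∑ τ : KochTri m t, f (Sum.inl τ))
        + ∑ w : KochTri m t × Fin 3 × Fin m, f (Sum.inr w) :=
  Fintype.sum_sum_type f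

lemma card_filter_KV_succ (m t : ℕ) (p : KochVertex m (t+1) → Prop) [inst : DecidablePred p] :
    (univ.filter p).card
      = (@Finset.filter _ (fun v : KochVertex m t => p (Sum.inl v)) (fun v => inst (Sum.inl v))
          univ).card
        + (@Finset.filter _ (fun w : KochTri m t × Fin 3 × Fin m × Fin 2 => p (Sum.inr w))
          (fun w => inst (Sum.inr w)) univ).card :=
  @card_filter_sum _ _ _ _ p inst

/-- Number of (triangle, corner-index) pairs whose corner is `v`. -/
def KochN (m t : ℕ) (v : KochVertex m t) : ℕ :=
  (univ.filter fun p : KochTri m t × Fin 3 => KochCorner m t p.1 p.2 = v).card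

lemma kochN_zero (m : ℕ) (v : KochVertex m 0) : KochN m 0 v = 1 := by
  unfold KochN
  rw [Finset.card_filter, Fintype.sum_prod_type]
  have : ∀ τ : KochTri m 0, (∑ i : Fin 3, if KochCorner m 0 τ i = v then 1 else 0) = 1 := by
    intro τ
    show (∑ i : Fin 3, if i = v then 1 else 0) = 1
    simp
    exact Finset.card_eq_one.mpr ⟨v, Finset.ext fun x => by simp; exact Finset.mem_singleton.symm⟩
  simp [this, KT_card_zero]

lemma kochN_succ_inl (m t : ℕ) (v : KochVertex m t) :
    KochN m (t+1) (Sum.inl v) = (m+1) * KochN m t v := by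
  unfold KochN
  rw [Finset.card_filter, Finset.card_filter, Fintype.sum_prod_type,
    sum_KT_succ m t (fun x => ∑ i : Fin 3, if KochCorner m (t+1) x i = Sum.inl v then 1 else 0)]
  have h1 : (∑ τ : KochTri m t, ∑ i : Fin 3,
      if KochCorner m (t+1) (Sum.inl τ) i = Sum.inl v then 1 else 0)
      = ∑ p : KochTri m t × Fin 3, if KochCorner m t p.1 p.2 = v then 1 else 0 := by
    rw [Fintype.sum_prod_type]
    simp [koch_corner_inl]
  have h2 : (∑ w : KochTri m t × Fin 3 × Fin m, ∑ i : Fin 3,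
      if KochCorner m (t+1) (Sum.inr w) i = Sum.inl v then 1 else 0)
      = m * ∑ p : KochTri m t × Fin 3, if KochCorner m t p.1 p.2 = v then 1 else 0 := by
    have key : ∀ w : KochTri m t × Fin 3 × Fin m, (∑ i : Fin 3,
        if KochCorner m (t+1) (Sum.inr w) i = Sum.inl v then 1 else 0)
        = if KochCorner m t w.1 w.2.1 = v then 1 else 0 := by
      rintro ⟨τ, c, g⟩
      simp only [koch_corner_inr_eq_inl]
      by_cases hP : KochCorner m t τ c = v <;> simp [Fin.sum_univ_three, hP]
    simp only [key]
    rw [Fintype.sum_prod_type]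
    conv_rhs => rw [Fintype.sum_prod_type, Finset.mul_sum]
    refine Finset.sum_congr rfl fun τ _ => ?_
    rw [Fintype.sum_prod_type, Finset.mul_sum]
    refine Finset.sum_congr rfl fun c _ => ?_
    by_cases hP : KochCorner m t τ c = v <;> simp [hP]
  rw [h1, h2]
  ring

lemma kochN_succ_inr (m t : ℕ) (w : KochTri m t × Fin 3 × Fin m × Fin 2) :
    KochN m (t+1) (Sum.inr w) = 1 := by
  obtain ⟨τ, c, g, p⟩ := w
  unfold KochN
  rw [Finset.card_filter, Fintype.sum_prod_type,
    sum_KT_succ m t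
      (fun x => ∑ i : Fin 3, if KochCorner m (t+1) x i = Sum.inr (τ, c, g, p) then 1 else 0)]
  have h1 : (∑ τ' : KochTri m t, ∑ i : Fin 3,
      if KochCorner m (t+1) (Sum.inl τ') i = Sum.inr (τ, c, g, p) then 1 else 0) = 0 := by
    simp [koch_corner_inl]
  have h2 : (∑ w' : KochTri m t × Fin 3 × Fin m, ∑ i : Fin 3,
      if KochCorner m (t+1) (Sum.inr w') i = Sum.inr (τ, c, g, p) then 1 else 0) = 1 := by
    have key : ∀ w' : KochTri m t × Fin 3 × Fin m, (∑ i : Fin 3,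
        if KochCorner m (t+1) (Sum.inr w') i = Sum.inr (τ, c, g, p) then 1 else 0)
        = if w' = (τ, c, g) then 1 else 0 := by
      rintro ⟨τ', c', g'⟩
      simp only [koch_corner_inr_eq_inr, Fin.sum_univ_three, Prod.mk.injEq]
      by_cases h1 : τ' = τ <;> by_cases h2 : c' = c <;> by_cases h3 : g' = g <;>
        fin_cases p <;> simp [h1, h2, h3]
    simp [key]
  rw [h1, h2]
lemma koch_adj_zero {m : ℕ} {u v : KochVertex m 0} :
    (KochGraph m 0).Adj u v ↔ u ≠ v :=
  ⟨fun h => h.1, fun h => ⟨h, (), u, v, rfl, rfl⟩⟩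

lemma koch_degree_eq_two_mul (m t : ℕ) : ∀ v : KochVertex m t,
    (KochGraph m t).degree v = 2 * KochN m t v := by
  induction t with
  | zero =>
    intro v
    rw [SimpleGraph.degree, SimpleGraph.neighborFinset_eq_filter, kochN_zero]
    have h : (univ.filter fun u => (KochGraph m 0).Adj v u) = univ.erase v := by
      ext u
      simp only [Finset.mem_filter, Finset.mem_univ, true_and, Finset.mem_erase, and_true,
        koch_adj_zero]
      exact ne_comm
    rw [h, Finset.card_erase_of_mem (Finset.mem_univ v), Finset.card_univ, KV_card_zero]
  | succ t ih =>
    have hdeg : ∀ w : KochVertex m (t+1), (KochGraph m (t+1)).degree w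
        = (univ.filter fun u => (KochGraph m (t+1)).Adj w u).card := fun w => by
      rw [SimpleGraph.degree, SimpleGraph.neighborFinset_eq_filter]
    rintro (v | ⟨τ, c, g, p⟩)
    · rw [hdeg (Sum.inl v),
        card_filter_KV_succ m t (fun u => (KochGraph m (t+1)).Adj (Sum.inl v) u),
        kochN_succ_inl]
      have h1 : (univ.filter fun u : KochVertex m t =>
          (KochGraph m (t+1)).Adj (Sum.inl v) (Sum.inl u))
          = univ.filter fun u => (KochGraph m t).Adj v u := by
        simp only [koch_adj_inl_inl]
      have h2 : (univ.filter fun w : KochTri m t × Fin 3 × Fin m × Fin 2 =>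
          (KochGraph m (t+1)).Adj (Sum.inl v) (Sum.inr w)).card = 2 * m * KochN m t v := by
        have key : ∀ w : KochTri m t × Fin 3 × Fin m × Fin 2,
            (KochGraph m (t+1)).Adj (Sum.inl v) (Sum.inr w) ↔ KochCorner m t w.1 w.2.1 = v := by
          rintro ⟨τ, c, g, p⟩
          rw [koch_adj_inl_inr, eq_comm]
        unfold KochN
        rw [Finset.card_filter, Finset.card_filter]
        simp only [key]
        rw [Fintype.sum_prod_type]
        conv_rhs => rw [Fintype.sum_prod_type, Finset.mul_sum]
        refine Finset.sum_congr rfl fun τ _ => ?_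
        rw [Fintype.sum_prod_type, Finset.mul_sum]
        refine Finset.sum_congr rfl fun c _ => ?_
        by_cases hP : KochCorner m t τ c = v <;>
          simp [hP, Fintype.card_prod, mul_comm, mul_assoc]
      have h3 : (univ.filter fun u => (KochGraph m t).Adj v u).card = 2 * KochN m t v := by
        rw [← SimpleGraph.neighborFinset_eq_filter]
        exact ih v
      rw [h1, h2, h3]
      ring
    · rw [hdeg (Sum.inr (τ, c, g, p)),
        card_filter_KV_succ m t (fun u => (KochGraph m (t+1)).Adj (Sum.inr (τ, c, g, p)) u),
        kochN_succ_inr]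
      have h1 : (univ.filter fun u : KochVertex m t =>
          (KochGraph m (t+1)).Adj (Sum.inr (τ, c, g, p)) (Sum.inl u)).card = 1 := by
        have key : ∀ u : KochVertex m t,
            (KochGraph m (t+1)).Adj (Sum.inr (τ, c, g, p)) (Sum.inl u)
              ↔ u = KochCorner m t τ c := by
          intro u
          exact ((KochGraph m (t+1)).adj_comm _ _).trans koch_adj_inl_inr
        simp only [key]
        rw [Finset.filter_eq', if_pos (Finset.mem_univ _), Finset.card_singleton]
      have h2 : (univ.filter fun w : KochTri m t × Fin 3 × Fin m × Fin 2 =>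
          (KochGraph m (t+1)).Adj (Sum.inr (τ, c, g, p)) (Sum.inr w)).card = 1 := by
        have key : ∀ w : KochTri m t × Fin 3 × Fin m × Fin 2,
            (KochGraph m (t+1)).Adj (Sum.inr (τ, c, g, p)) (Sum.inr w)
              ↔ w = (τ, c, g, if p = 0 then 1 else 0) := by
          rintro ⟨τ', c', g', p'⟩
          rw [koch_adj_inr_inr]
          fin_cases p <;> fin_cases p' <;>
            simp [Prod.ext_iff, eq_comm, and_comm] <;> aesop
        simp only [key]
        rw [Finset.filter_eq', if_pos (Finset.mem_univ _), Finset.card_singleton]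
      rw [h1, h2]
lemma koch_birth_inl (m t : ℕ) (v : KochVertex m t) :
    KochBirth m (t+1) (Sum.inl v) = KochBirth m t v := rfl

lemma koch_birth_inr (m t : ℕ) (w : KochTri m t × Fin 3 × Fin m × Fin 2) :
    KochBirth m (t+1) (Sum.inr w) = t+1 := rfl

lemma koch_birth_le (m : ℕ) : ∀ t (v : KochVertex m t), KochBirth m t v ≤ t
  | 0, _ => le_refl 0
  | t+1, Sum.inl v => (koch_birth_le m t v).trans (Nat.le_succ t)
  | _+1, Sum.inr _ => le_refl _

lemma kochN_eq_pow (m : ℕ) : ∀ t (v : KochVertex m t),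
    KochN m t v = (m+1) ^ (t - KochBirth m t v) := by
  intro t
  induction t with
  | zero => intro v; rw [kochN_zero]; rfl
  | succ t ih =>
    rintro (v | w)
    · rw [kochN_succ_inl, ih v, koch_birth_inl, ← pow_succ']
      congr 1
      have := koch_birth_le m t v
      omega
    · rw [kochN_succ_inr, koch_birth_inr, Nat.sub_self, pow_zero]

lemma koch_degree_formula (m t : ℕ) (v : KochVertex m t) :
    (KochGraph m t).degree v = 2 * (m+1) ^ (t - KochBirth m t v) := by
  rw [koch_degree_eq_two_mul, kochN_eq_pow]

lemma koch_tri_card (m : ℕ) : ∀ t, Fintype.card (KochTri m t) = (3*m+1) ^ t := by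
  intro t
  induction t with
  | zero => rw [KT_card_zero, pow_zero]
  | succ t ih =>
    rw [KT_card_succ, ih, Fintype.card_prod, Fintype.card_prod, Fintype.card_fin,
      Fintype.card_fin, ih, pow_succ]
    ring

lemma koch_birth_card (m : ℕ) : ∀ t j, (univ.filter fun v : KochVertex m t =>
    KochBirth m t v = j).card
    = if j = 0 then 3 else if j ≤ t then 6*m*(3*m+1)^(j-1) else 0 := by
  intro t
  induction t with
  | zero =>
    intro j
    rcases eq_or_ne j 0 with rfl | hj
    · have huniv : (univ.filter fun v : KochVertex m 0 => KochBirth m 0 v = 0) = univ :=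
        Finset.filter_true_of_mem fun v _ => rfl
      rw [if_pos rfl, huniv, Finset.card_univ, KV_card_zero]
    · rw [if_neg hj, if_neg (by omega)]
      exact Finset.card_eq_zero.mpr (Finset.filter_false_of_mem
        fun v _ h => hj (show (0:ℕ) = j from h).symm)
  | succ t ih =>
    intro j
    rw [card_filter_KV_succ m t (fun v => KochBirth m (t+1) v = j)]
    have hl : (univ.filter fun v : KochVertex m t => KochBirth m (t+1) (Sum.inl v) = j).card
        = if j = 0 then 3 else if j ≤ t then 6*m*(3*m+1)^(j-1) else 0 := ih j
    have hr : (univ.filter fun w : KochTri m t × Fin 3 × Fin m × Fin 2 =>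
        KochBirth m (t+1) (Sum.inr w) = j).card
        = if j = t+1 then 6*m*(3*m+1)^t else 0 := by
      rcases eq_or_ne j (t+1) with rfl | hj
      · have huniv : (univ.filter fun w : KochTri m t × Fin 3 × Fin m × Fin 2 =>
            KochBirth m (t+1) (Sum.inr w) = t+1) = univ :=
          Finset.filter_true_of_mem fun w _ => rfl
        rw [if_pos rfl, huniv, Finset.card_univ,
          Fintype.card_prod, Fintype.card_prod, Fintype.card_prod, Fintype.card_fin,
          Fintype.card_fin, Fintype.card_fin, koch_tri_card]
        ring
      · rw [if_neg hj]
        exact Finset.card_eq_zero.mpr (Finset.filter_false_of_mem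
          fun w _ h => hj (show t+1 = j from h).symm)
    rw [hl, hr]
    rcases eq_or_ne j 0 with rfl | hj0
    · rw [if_pos rfl, if_pos rfl, if_neg (by omega)]
    · rw [if_neg hj0, if_neg hj0]
      rcases eq_or_ne j (t+1) with rfl | hjt
      · rw [if_neg (by omega), if_pos rfl, if_pos (le_refl _), Nat.add_sub_cancel, zero_add]
      · rw [if_neg hjt, add_zero]
        by_cases hle : j ≤ t
        · rw [if_pos hle, if_pos (by omega)]
        · rw [if_neg hle, if_neg (by omega)]
/-- For all integers m ≥ 1, t ≥ 0 and 1 ≤ i ≤ t, the number of vertices of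
`K_{m,t}` with degree exactly `2(m+1)^(t-i)` equals `6m(3m+1)^(i-1)`, and the number of
vertices of degree exactly `2(m+1)^t` equals 3, and these are exactly the initial vertices. -/
theorem koch_degree_distribution (m i t : ℕ) (hm : 1 ≤ m) (hi : 1 ≤ i) (hit : i ≤ t) :
    (Finset.univ.filter fun v : KochVertex m t =>
        (KochGraph m t).degree v = 2 * (m + 1) ^ (t - i)).card = 6 * m * (3 * m + 1) ^ (i - 1)
    ∧ (Finset.univ.filter fun v : KochVertex m t =>
        (KochGraph m t).degree v = 2 * (m + 1) ^ t).card = 3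
    ∧ (Finset.univ.filter fun v : KochVertex m t =>
        (KochGraph m t).degree v = 2 * (m + 1) ^ t)
      = (Finset.univ.filter fun v : KochVertex m t => KochBirth m t v = 0) := by
  have key : ∀ j ≤ t, (univ.filter fun v : KochVertex m t =>
      (KochGraph m t).degree v = 2 * (m + 1) ^ (t - j))
      = univ.filter fun v => KochBirth m t v = j := by
    intro j hj
    ext v
    simp only [Finset.mem_filter, Finset.mem_univ, true_and, koch_degree_formula]
    constructor
    · intro h
      have h2 : (m+1) ^ (t - KochBirth m t v) = (m+1) ^ (t - j) := by omega
      have h3 := Nat.pow_right_injective (by omega : 2 ≤ m + 1) h2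
      have hb := koch_birth_le m t v
      omega
    · intro h
      rw [h]
  have key0 := key 0 (Nat.zero_le t)
  rw [Nat.sub_zero] at key0
  refine ⟨?_, ?_, key0⟩
  · rw [key i hit, koch_birth_card, if_neg (by omega), if_pos hit]
  · rw [key0, koch_birth_card, if_pos rfl]
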